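/- Let X be a compact Hausdorff metric-measurable Möbius space, T = (x,y,z) a triple of pairwise distinct points of X, and (φᵢ) a sequence of Möbius automorphisms of X such that φᵢ(T) converges (along a nonprincipal ultrafilter θ on ℕ) to a triple T' = (x',y',z') of pairwise distinct points. Then the pointwise ultralimit φ = lim_θ φᵢ exists, is a Möbius automorphism of X, and φ(T) = T'. -/
import Mathlib


/-- Projective equality of triples of reals, i.e. equality in `ℝP²`. -/
def ProjEq (a b : ℝ × ℝ × ℝ) : Prop :=
  ∃ c : ℝ, 0 < c ∧ b.1 = c * a.1 ∧ b.2.1 = c * a.2.1 ∧ b.2.2 = c * a.2.2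

/-- A quadruple is admissible if no entry occurs three or four times. -/
def Admissible {X : Type*} (x y z u : X) : Prop :=
  ¬ ((x = y ∧ y = z) ∨ (x = y ∧ y = u) ∨ (x = z ∧ z = u) ∨ (y = z ∧ z = u))

open scoped Classical in
/-- The cross-ratio triple of a quadruple with respect to an extended metric `d` with
infinitely remote point `ω`, with the standard conventions when `ω` occurs among the
entries: e.g. `crt(x,y,z,ω) = (d(x,y) : d(x,z) : d(y,z))` and `crt(x,y,ω,ω) = (0:1:1)`. -/
noncomputable def crt {X : Type*} (d : X → X → ℝ) (ω x y z u : X) : ℝ × ℝ × ℝ :=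
  if x = ω then
    (if y = ω then ((0 : ℝ), 1, 1) else if z = ω then ((1 : ℝ), 0, 1)
      else if u = ω then ((1 : ℝ), 1, 0) else (d z u, d y u, d y z))
  else if y = ω then
    (if z = ω then ((1 : ℝ), 1, 0) else if u = ω then ((1 : ℝ), 0, 1)
      else (d z u, d x z, d x u))
  else if z = ω then
    (if u = ω then ((0 : ℝ), 1, 1) else (d x y, d y u, d x u))
  else if u = ω then (d x y, d x z, d y z)
  else (d x y * d z u, d x z * d y u, d x u * d y z)


/-- A Möbius structure on a compact space `X`: for every point `ω` a metric
`dist ω : X → X → ℝ` on `X \ {ω}` having `ω` as infinitely remote point, all metrics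
pairwise Möbius equivalent, each satisfying the Ptolemy inequality, and compatible
with the topology of `X`. -/
structure MoebiusStructure (X : Type*) [TopologicalSpace X] where
  dist : X → X → X → ℝ
  dist_self : ∀ ω x, dist ω x x = 0
  dist_comm : ∀ ω x y, dist ω x y = dist ω y x
  dist_pos : ∀ ω x y, x ≠ ω → y ≠ ω → x ≠ y → 0 < dist ω x y
  dist_triangle : ∀ ω x y z, x ≠ ω → y ≠ ω → z ≠ ω →
    dist ω x z ≤ dist ω x y + dist ω y z
  ptolemy : ∀ ω x y z u, x ≠ ω → y ≠ ω → z ≠ ω → u ≠ ω →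
    dist ω x z * dist ω y u ≤ dist ω x y * dist ω z u + dist ω x u * dist ω y z
  moebius_equivalent : ∀ ω ω' x y z u, Admissible x y z u →
    ProjEq (crt (dist ω) ω x y z u) (crt (dist ω') ω' x y z u)
  isOpen_ball : ∀ ω x r, x ≠ ω → IsOpen {y | y ≠ ω ∧ dist ω x y < r}
  isOpen_compl_closedBall : ∀ ω x r, x ≠ ω →
    IsOpen ({y | y ≠ ω ∧ r < dist ω x y} ∪ {ω})
  nhds_basis : ∀ ω x, x ≠ ω → ∀ U ∈ nhds x, ∃ r > 0, {y | y ≠ ω ∧ dist ω x y < r} ⊆ U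

namespace MoebiusStructure

variable {X : Type*} [TopologicalSpace X] (S : MoebiusStructure X)

/-- A Möbius map of `(X, S)`: preserves all cross-ratio triples. -/
def IsMoebiusMap (φ : X → X) : Prop :=
  ∀ ω x y z u, Admissible x y z u →
    ProjEq (crt (S.dist ω) ω x y z u) (crt (S.dist ω) ω (φ x) (φ y) (φ z) (φ u))

/-- `(x,z)` separates `(y,u)` on `σ`: `y` and `u` lie in different connected components
of `σ \ {x,z}`. -/
def Separates (σ : Set X) (x z y u : X) : Prop :=
  ∀ C : Set X, IsPreconnected C → C ⊆ σ \ {x, z} → ¬(y ∈ C ∧ u ∈ C)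

/-- A Ptolemy circle: a subset homeomorphic to `S¹` on which the Ptolemy equality holds
for every quadruple of distinct points with separated diagonal. -/
def IsPtolemyCircle (σ : Set X) : Prop :=
  Nonempty (σ ≃ₜ Metric.sphere (0 : ℂ) 1) ∧
    ∀ ω, ∀ x ∈ σ, ∀ y ∈ σ, ∀ z ∈ σ, ∀ u ∈ σ,
      x ≠ ω → y ≠ ω → z ≠ ω → u ≠ ω →
      x ≠ y → x ≠ z → x ≠ u → y ≠ z → y ≠ u → z ≠ u →
      Separates σ x z y u →
      S.dist ω x z * S.dist ω y u =
        S.dist ω x y * S.dist ω z u + S.dist ω x u * S.dist ω y z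

/-- A Ptolemy line in `X_ω`: a Ptolemy circle through `ω` with `ω` removed. -/
def IsPtolemyLine (ω : X) (ℓ : Set X) : Prop :=
  ∃ σ : Set X, S.IsPtolemyCircle σ ∧ ω ∈ σ ∧ ℓ = σ \ {ω}

/-- A metric sphere between `ω` and `ω'`: a sphere of positive radius centered at `ω`
for the metric with infinitely remote point `ω'`. -/
def IsSphereBetween (ω ω' : X) (Sp : Set X) : Prop :=
  ∃ r : ℝ, 0 < r ∧ Sp = {x | x ≠ ω' ∧ S.dist ω' ω x = r}

/-- A strong space inversion w.r.t. `ω`, `ω'` and a metric sphere `Sp` between them: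
a Möbius involution swapping `ω` and `ω'`, fixing `Sp` pointwise, and preserving every
Ptolemy circle through `ω` and `ω'`. -/
def IsStrongInversion (ω ω' : X) (Sp : Set X) (φ : X → X) : Prop :=
  S.IsMoebiusMap φ ∧ Function.Bijective φ ∧ φ ∘ φ = id ∧
    φ ω = ω' ∧ φ ω' = ω ∧ (∀ x ∈ Sp, φ x = x) ∧
    ∀ σ : Set X, S.IsPtolemyCircle σ → ω ∈ σ → ω' ∈ σ → φ '' σ = σ

/-- Property (E): existence of a Ptolemy circle. -/
def PropE : Prop := ∃ σ : Set X, S.IsPtolemyCircle σ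

/-- Property (sI): existence of strong space inversions for every pair of distinct points
and every metric sphere between them. -/
def PropSI : Prop :=
  ∀ ω ω' : X, ω ≠ ω' → ∀ Sp : Set X, S.IsSphereBetween ω ω' Sp →
    ∃ φ : X → X, S.IsStrongInversion ω ω' Sp φ

end MoebiusStructure

section UltralimitAux

open Filter Topology

variable {X : Type*} [TopologicalSpace X]

private lemma projEq_symm' {a b : ℝ × ℝ × ℝ} (h : ProjEq a b) : ProjEq b a := by
  obtain ⟨c, hc, h1, h2, h3⟩ := h
  refine ⟨c⁻¹, by positivity, ?_, ?_, ?_⟩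
  · rw [h1, inv_mul_cancel_left₀ hc.ne']
  · rw [h2, inv_mul_cancel_left₀ hc.ne']
  · rw [h3, inv_mul_cancel_left₀ hc.ne']

private lemma projEq_trans' {a b c : ℝ × ℝ × ℝ} (h : ProjEq a b) (h' : ProjEq b c) :
    ProjEq a c := by
  obtain ⟨c1, hc1, h1, h2, h3⟩ := h
  obtain ⟨c2, hc2, h1', h2', h3'⟩ := h'
  exact ⟨c2 * c1, by positivity, by rw [h1', h1]; ring, by rw [h2', h2]; ring,
    by rw [h3', h3]; ring⟩

private lemma crt_of_ne {X : Type*} (d : X → X → ℝ) {ω x y z u : X}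
    (hx : x ≠ ω) (hy : y ≠ ω) (hz : z ≠ ω) (hu : u ≠ ω) :
    crt d ω x y z u = (d x y * d z u, d x z * d y u, d x u * d y z) := by
  simp [crt, hx, hy, hz, hu]

private lemma admissible_of_ne {x y z u : X} (hxy : x ≠ y) (hxz : x ≠ z) (hxu : x ≠ u)
    (hyz : y ≠ z) (hyu : y ≠ u) (hzu : z ≠ u) : Admissible x y z u := by
  rintro (⟨h1, h2⟩ | ⟨h1, h2⟩ | ⟨h1, h2⟩ | ⟨h1, h2⟩) <;> first
    | exact hxy h1 | exact hxz h1 | exact hyz h1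

private lemma exists_lim [CompactSpace X] (θ : Ultrafilter ℕ) (f : ℕ → X) :
    ∃ l, Tendsto f θ (𝓝 l) := by
  obtain ⟨a, -, ha⟩ := isCompact_univ.ultrafilter_le_nhds (θ.map f)
    (by simp [le_principal_iff])
  exact ⟨a, ha⟩

private lemma eventually_ne' [T1Space X] {θ : Ultrafilter ℕ} {P : ℕ → X} {p ω : X}
    (hP : Tendsto P θ (𝓝 p)) (hp : p ≠ ω) : ∀ᶠ i in (θ : Filter ℕ), P i ≠ ω := by
  have : {ω}ᶜ ∈ 𝓝 p := isOpen_compl_singleton.mem_nhds (by simpa using hp)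
  filter_upwards [hP this] with i hi using hi

private lemma tendsto_dist' (S : MoebiusStructure X) (θ : Ultrafilter ℕ) {ω p q : X}
    (hp : p ≠ ω) (hq : q ≠ ω) {P Q : ℕ → X}
    (hP : Tendsto P θ (𝓝 p)) (hQ : Tendsto Q θ (𝓝 q)) :
    Tendsto (fun i => S.dist ω (P i) (Q i)) θ (𝓝 (S.dist ω p q)) := by
  rw [Metric.tendsto_nhds]
  intro ε hε
  have hb1 : {w | w ≠ ω ∧ S.dist ω p w < ε / 3} ∈ 𝓝 p :=
    (S.isOpen_ball ω p (ε / 3) hp).mem_nhds ⟨hp, by rw [S.dist_self]; positivity⟩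
  have hb2 : {w | w ≠ ω ∧ S.dist ω q w < ε / 3} ∈ 𝓝 q :=
    (S.isOpen_ball ω q (ε / 3) hq).mem_nhds ⟨hq, by rw [S.dist_self]; positivity⟩
  filter_upwards [hP hb1, hQ hb2] with i h1 h2
  obtain ⟨hPω, hd1⟩ := h1
  obtain ⟨hQω, hd2⟩ := h2
  rw [Real.dist_eq, abs_lt]
  have a1 := S.dist_triangle ω (P i) p (Q i) hPω hp hQω
  have a2 := S.dist_triangle ω p q (Q i) hp hq hQω
  have a3 := S.dist_triangle ω p (P i) q hp hPω hq
  have a4 := S.dist_triangle ω (P i) (Q i) q hPω hQω hq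
  have c1 : S.dist ω (P i) p = S.dist ω p (P i) := S.dist_comm _ _ _
  have c2 : S.dist ω (Q i) q = S.dist ω q (Q i) := S.dist_comm _ _ _
  have c3 : S.dist ω q (Q i) = S.dist ω (Q i) q := S.dist_comm _ _ _
  constructor <;> nlinarith

/-- The degeneration contradiction: if a `ProjEq` relation holds eventually between
cross-ratio triples of two quadruples of sequences, the first quadruple degenerates in
its first component but not the second, while the second quadruple has positive first
component in the limit, we get a contradiction. -/
private lemma degenerate_contra [T2Space X] (S : MoebiusStructure X) (θ : Ultrafilter ℕ)
    {ω p q r u p' q' r' u' : X} {P Q R U P' Q' R' U' : ℕ → X}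
    (hP : Tendsto P θ (𝓝 p)) (hQ : Tendsto Q θ (𝓝 q))
    (hR : Tendsto R θ (𝓝 r)) (hU : Tendsto U θ (𝓝 u))
    (hP' : Tendsto P' θ (𝓝 p')) (hQ' : Tendsto Q' θ (𝓝 q'))
    (hR' : Tendsto R' θ (𝓝 r')) (hU' : Tendsto U' θ (𝓝 u'))
    (hpω : p ≠ ω) (hqω : q ≠ ω) (hrω : r ≠ ω) (huω : u ≠ ω)
    (hpω' : p' ≠ ω) (hqω' : q' ≠ ω) (hrω' : r' ≠ ω) (huω' : u' ≠ ω)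
    (hPE : ∀ᶠ i in (θ : Filter ℕ),
      ProjEq (crt (S.dist ω) ω (P i) (Q i) (R i) (U i))
        (crt (S.dist ω) ω (P' i) (Q' i) (R' i) (U' i)))
    (h1 : S.dist ω p q * S.dist ω r u = 0)
    (h2 : 0 < S.dist ω p r * S.dist ω q u)
    (h3 : 0 < S.dist ω p' q' * S.dist ω r' u') : False := by
  have key : (fun i => (S.dist ω (P' i) (Q' i) * S.dist ω (R' i) (U' i)) *
        (S.dist ω (P i) (R i) * S.dist ω (Q i) (U i)))
      =ᶠ[(θ : Filter ℕ)] (fun i => (S.dist ω (P i) (Q i) * S.dist ω (R i) (U i)) *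
        (S.dist ω (P' i) (R' i) * S.dist ω (Q' i) (U' i))) := by
    filter_upwards [hPE, eventually_ne' hP hpω, eventually_ne' hQ hqω,
      eventually_ne' hR hrω, eventually_ne' hU huω, eventually_ne' hP' hpω',
      eventually_ne' hQ' hqω', eventually_ne' hR' hrω', eventually_ne' hU' huω']
      with i hpe e1 e2 e3 e4 e5 e6 e7 e8
    rw [crt_of_ne _ e1 e2 e3 e4, crt_of_ne _ e5 e6 e7 e8] at hpe
    obtain ⟨c, hc, g1, g2, g3⟩ := hpe
    simp only at g1 g2
    rw [g1, g2]; ring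
  have lim1 : Tendsto (fun i => (S.dist ω (P' i) (Q' i) * S.dist ω (R' i) (U' i)) *
        (S.dist ω (P i) (R i) * S.dist ω (Q i) (U i))) θ
      (𝓝 ((S.dist ω p' q' * S.dist ω r' u') * (S.dist ω p r * S.dist ω q u))) :=
    ((tendsto_dist' S θ hpω' hqω' hP' hQ').mul (tendsto_dist' S θ hrω' huω' hR' hU')).mul
      ((tendsto_dist' S θ hpω hrω hP hR).mul (tendsto_dist' S θ hqω huω hQ hU))
  have lim2 : Tendsto (fun i => (S.dist ω (P i) (Q i) * S.dist ω (R i) (U i)) *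
        (S.dist ω (P' i) (R' i) * S.dist ω (Q' i) (U' i))) θ
      (𝓝 ((S.dist ω p q * S.dist ω r u) * (S.dist ω p' r' * S.dist ω q' u'))) :=
    ((tendsto_dist' S θ hpω hqω hP hQ).mul (tendsto_dist' S θ hrω huω hR hU)).mul
      ((tendsto_dist' S θ hpω' hrω' hP' hR').mul (tendsto_dist' S θ hqω' huω' hQ' hU'))
  have := tendsto_nhds_unique (lim1.congr' key) lim2
  rw [h1, zero_mul] at this
  nlinarith

private lemma projEq_limit_aux (θ : Ultrafilter ℕ) (A B : ℝ × ℝ × ℝ) (K : ℕ → ℝ × ℝ × ℝ)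
    (hK : ∀ᶠ i in (θ : Filter ℕ), ProjEq A (K i))
    (t1 : Tendsto (fun i => (K i).1) θ (𝓝 B.1))
    (t2 : Tendsto (fun i => (K i).2.1) θ (𝓝 B.2.1))
    (t3 : Tendsto (fun i => (K i).2.2) θ (𝓝 B.2.2))
    (hj : (0 < A.1 ∧ 0 < B.1) ∨ (0 < A.2.1 ∧ 0 < B.2.1)) : ProjEq A B := by
  rcases hj with ⟨hA, hB⟩ | ⟨hA, hB⟩
  · refine ⟨B.1 / A.1, div_pos hB hA, by field_simp, ?_, ?_⟩
    · have hc : Tendsto (fun i => (K i).1 / A.1 * A.2.1) θ (𝓝 (B.1 / A.1 * A.2.1)) :=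
        (t1.div_const _).mul_const _
      refine tendsto_nhds_unique t2 (hc.congr' ?_)
      filter_upwards [hK] with i hi
      obtain ⟨c, hc0, g1, g2, g3⟩ := hi
      rw [g1, g2]
      field_simp
      try ring
    · have hc : Tendsto (fun i => (K i).1 / A.1 * A.2.2) θ (𝓝 (B.1 / A.1 * A.2.2)) :=
        (t1.div_const _).mul_const _
      refine tendsto_nhds_unique t3 (hc.congr' ?_)
      filter_upwards [hK] with i hi
      obtain ⟨c, hc0, g1, g2, g3⟩ := hi
      rw [g1, g3]
      field_simp
      try ring
  · refine ⟨B.2.1 / A.2.1, div_pos hB hA, ?_, by field_simp, ?_⟩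
    · have hc : Tendsto (fun i => (K i).2.1 / A.2.1 * A.1) θ (𝓝 (B.2.1 / A.2.1 * A.1)) :=
        (t2.div_const _).mul_const _
      refine tendsto_nhds_unique t1 (hc.congr' ?_)
      filter_upwards [hK] with i hi
      obtain ⟨c, hc0, g1, g2, g3⟩ := hi
      rw [g1, g2]
      field_simp
      try ring
    · have hc : Tendsto (fun i => (K i).2.1 / A.2.1 * A.2.2) θ (𝓝 (B.2.1 / A.2.1 * A.2.2)) :=
        (t2.div_const _).mul_const _
      refine tendsto_nhds_unique t3 (hc.congr' ?_)
      filter_upwards [hK] with i hi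
      obtain ⟨c, hc0, g1, g2, g3⟩ := hi
      rw [g2, g3]
      field_simp
      try ring


private lemma exists_fresh [Infinite X] (l : List X) : ∃ ω : X, ∀ p ∈ l, p ≠ ω := by
  obtain ⟨ω, hω⟩ := l.finite_toSet.infinite_compl.nonempty
  refine ⟨ω, fun p hp h' => ?_⟩
  exact hω (by simpa using h' ▸ hp)

end UltralimitAux

open Filter Topology

/-- in a compact Hausdorff Möbius (Ptolemy) space, if a sequence of Möbius
automorphisms maps a nondegenerate triple to triples converging (along a nonprincipal
ultrafilter `θ`) to a nondegenerate triple, then the pointwise `θ`-ultralimit exists, is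
a Möbius automorphism, and maps the triple to the limit triple. -/
theorem ultralimit_of_moebius_automorphisms
    {X : Type*} [TopologicalSpace X] [CompactSpace X] [T2Space X]
    (S : MoebiusStructure X)
    (θ : Ultrafilter ℕ) (hθ : (θ : Filter ℕ) ≤ Filter.cofinite)
    (φ : ℕ → X → X)
    (hφ : ∀ i, S.IsMoebiusMap (φ i) ∧ Function.Bijective (φ i))
    (x y z x' y' z' : X)
    (hxy : x ≠ y) (hxz : x ≠ z) (hyz : y ≠ z)
    (hxy' : x' ≠ y') (hxz' : x' ≠ z') (hyz' : y' ≠ z')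
    (hx : Tendsto (fun i => φ i x) θ (𝓝 x'))
    (hy : Tendsto (fun i => φ i y) θ (𝓝 y'))
    (hz : Tendsto (fun i => φ i z) θ (𝓝 z')) :
    ∃ ψ : X → X, (∀ p : X, Tendsto (fun i => φ i p) θ (𝓝 (ψ p))) ∧
      S.IsMoebiusMap ψ ∧ Function.Bijective ψ ∧
      ψ x = x' ∧ ψ y = y' ∧ ψ z = z' := by
  classical
  choose ψ hψ using fun p : X => exists_lim θ fun i => φ i p
  have hψx : ψ x = x' := tendsto_nhds_unique (hψ x) hx
  have hψy : ψ y = y' := tendsto_nhds_unique (hψ y) hy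
  have hψz : ψ z = z' := tendsto_nhds_unique (hψ z) hz
  cases finite_or_infinite X with
  | inl hfin =>
    have hall : ∀ᶠ i in (θ : Filter ℕ), ∀ p, φ i p = ψ p := by
      rw [Filter.eventually_all]
      intro p
      have h := hψ p
      rw [nhds_discrete X, tendsto_pure] at h
      exact h
    obtain ⟨i0, hi0⟩ := hall.exists
    have hfun : ψ = φ i0 := funext fun p => (hi0 p).symm
    exact ⟨ψ, hψ, hfun ▸ (hφ i0).1, hfun ▸ (hφ i0).2, hψx, hψy, hψz⟩
  | inr hinf =>
    -- Injectivity of the ultralimit map.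
    have hinj : Function.Injective ψ := by
      intro p q hpq
      by_contra hne
      obtain ⟨a, b, hab, haw, hbw⟩ : ∃ a b : X, a ≠ b ∧ ψ a ≠ ψ p ∧ ψ b ≠ ψ p := by
        by_cases h1 : ψ p = x'
        · exact ⟨y, z, hyz, by rw [hψy, h1]; exact hxy'.symm, by rw [hψz, h1]; exact hxz'.symm⟩
        · by_cases h2 : ψ p = y'
          · exact ⟨x, z, hxz, by rw [hψx, h2]; exact hxy', by rw [hψz, h2]; exact hyz'.symm⟩
          · exact ⟨x, y, hxy, by rw [hψx]; exact fun h => h1 h.symm,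
              by rw [hψy]; exact fun h => h2 h.symm⟩
      have hpa : p ≠ a := fun h => haw (congrArg ψ h.symm)
      have hpb : p ≠ b := fun h => hbw (congrArg ψ h.symm)
      have hqa : q ≠ a := fun h => haw ((congrArg ψ h.symm).trans hpq.symm)
      have hqb : q ≠ b := fun h => hbw ((congrArg ψ h.symm).trans hpq.symm)
      obtain ⟨ω, hω⟩ := exists_fresh (X := X) [p, q, a, b, ψ p, ψ a, ψ b]
      have hωp : p ≠ ω := hω p (by simp)
      have hωq : q ≠ ω := hω q (by simp)
      have hωa : a ≠ ω := hω a (by simp)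
      have hωb : b ≠ ω := hω b (by simp)
      have hωψp : ψ p ≠ ω := hω (ψ p) (by simp)
      have hωψq : ψ q ≠ ω := hpq ▸ hωψp
      have hωψa : ψ a ≠ ω := hω (ψ a) (by simp)
      have hωψb : ψ b ≠ ω := hω (ψ b) (by simp)
      refine degenerate_contra S θ
        (P := fun i => φ i p) (Q := fun i => φ i q) (R := fun i => φ i a)
        (U := fun i => φ i b)
        (P' := fun _ => p) (Q' := fun _ => q) (R' := fun _ => a) (U' := fun _ => b)
        (hψ p) (hψ q) (hψ a) (hψ b)
        tendsto_const_nhds tendsto_const_nhds tendsto_const_nhds tendsto_const_nhds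
        hωψp hωψq hωψa hωψb hωp hωq hωa hωb
        (Filter.Eventually.of_forall fun i => projEq_symm'
          ((hφ i).1 ω p q a b (admissible_of_ne hne hpa hpb hqa hqb hab)))
        (by rw [← hpq, S.dist_self, zero_mul]) ?_ ?_
      · exact mul_pos (S.dist_pos ω _ _ hωψp hωψa (fun h => haw h.symm))
          (S.dist_pos ω _ _ hωψq hωψb (fun h => hbw (h.symm.trans hpq.symm)))
      · exact mul_pos (S.dist_pos ω p q hωp hωq hne) (S.dist_pos ω a b hωa hωb hab)
    -- Key continuity-type lemma for ultralimits of Möbius maps.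
    have hL : ∀ (s : ℕ → X) (p : X), Tendsto s θ (𝓝 p) →
        Tendsto (fun i => φ i (s i)) θ (𝓝 (ψ p)) := by
      intro s p hs
      obtain ⟨v, hv⟩ := exists_lim θ fun i => φ i (s i)
      have hvp : v = ψ p := by
        by_contra hvv
        obtain ⟨a, b, hab, hpa, hpb⟩ : ∃ a b : X, a ≠ b ∧ p ≠ a ∧ p ≠ b := by
          by_cases h1 : p = x
          · exact ⟨y, z, hyz, h1 ▸ hxy, h1 ▸ hxz⟩
          · by_cases h2 : p = y
            · exact ⟨x, z, hxz, h1, fun h => hyz (h2.symm.trans h)⟩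
            · exact ⟨x, y, hxy, h1, h2⟩
        have hψab : ψ a ≠ ψ b := fun h => hab (hinj h)
        obtain ⟨ω, hω⟩ := exists_fresh (X := X) [p, a, b, v, ψ p, ψ a, ψ b]
        have hωp : p ≠ ω := hω p (by simp)
        have hωa : a ≠ ω := hω a (by simp)
        have hωb : b ≠ ω := hω b (by simp)
        have hωv : v ≠ ω := hω v (by simp)
        have hωψp : ψ p ≠ ω := hω (ψ p) (by simp)
        have hωψa : ψ a ≠ ω := hω (ψ a) (by simp)
        have hωψb : ψ b ≠ ω := hω (ψ b) (by simp)
        refine degenerate_contra S θ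
          (P := fun _ => p) (Q := s) (R := fun _ => a) (U := fun _ => b)
          (P' := fun i => φ i p) (Q' := fun i => φ i (s i)) (R' := fun i => φ i a)
          (U' := fun i => φ i b)
          tendsto_const_nhds hs tendsto_const_nhds tendsto_const_nhds
          (hψ p) hv (hψ a) (hψ b)
          hωp hωp hωa hωb hωψp hωv hωψa hωψb
          (Filter.Eventually.of_forall fun i => (hφ i).1 ω p (s i) a b
            (by rintro (⟨u1, u2⟩ | ⟨u1, u2⟩ | ⟨u1, u2⟩ | ⟨u1, u2⟩)
                exacts [hpa (u1.trans u2), hpb (u1.trans u2), hpa u1, hab u2]))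
          (by rw [S.dist_self, zero_mul]) ?_ ?_
        · exact mul_pos (S.dist_pos ω p a hωp hωa hpa) (S.dist_pos ω p b hωp hωb hpb)
        · exact mul_pos (S.dist_pos ω _ _ hωψp hωv (fun h => hvv h.symm))
            (S.dist_pos ω _ _ hωψa hωψb hψab)
      exact hvp ▸ hv
    -- Surjectivity.
    have hsurj : Function.Surjective ψ := by
      intro w
      choose s hs using fun i => (hφ i).2.2 w
      obtain ⟨p, hp⟩ := exists_lim θ s
      refine ⟨p, tendsto_nhds_unique (hL s p hp) ?_⟩
      simp only [hs]
      exact tendsto_const_nhds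
    -- Images of admissible quadruples are admissible.
    have hadm' : ∀ p q r u : X, Admissible p q r u → Admissible (ψ p) (ψ q) (ψ r) (ψ u) := by
      intro p q r u h
      rintro (⟨u1, u2⟩ | ⟨u1, u2⟩ | ⟨u1, u2⟩ | ⟨u1, u2⟩)
      · exact h (Or.inl ⟨hinj u1, hinj u2⟩)
      · exact h (Or.inr (Or.inl ⟨hinj u1, hinj u2⟩))
      · exact h (Or.inr (Or.inr (Or.inl ⟨hinj u1, hinj u2⟩)))
      · exact h (Or.inr (Or.inr (Or.inr ⟨hinj u1, hinj u2⟩)))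
    -- The ultralimit is a Möbius map.
    have hmoeb : S.IsMoebiusMap ψ := by
      intro ω0 p q r u hadm
      obtain ⟨ω, hω⟩ := exists_fresh (X := X) [p, q, r, u, ψ p, ψ q, ψ r, ψ u]
      have hωp : p ≠ ω := hω p (by simp)
      have hωq : q ≠ ω := hω q (by simp)
      have hωr : r ≠ ω := hω r (by simp)
      have hωu : u ≠ ω := hω u (by simp)
      have hωψp : ψ p ≠ ω := hω (ψ p) (by simp)
      have hωψq : ψ q ≠ ω := hω (ψ q) (by simp)
      have hωψr : ψ r ≠ ω := hω (ψ r) (by simp)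
      have hωψu : ψ u ≠ ω := hω (ψ u) (by simp)
      have key : ProjEq (crt (S.dist ω) ω p q r u)
          (crt (S.dist ω) ω (ψ p) (ψ q) (ψ r) (ψ u)) := by
        rw [crt_of_ne _ hωp hωq hωr hωu, crt_of_ne _ hωψp hωψq hωψr hωψu]
        have hev : ∀ᶠ i in (θ : Filter ℕ),
            crt (S.dist ω) ω (φ i p) (φ i q) (φ i r) (φ i u) =
              (S.dist ω (φ i p) (φ i q) * S.dist ω (φ i r) (φ i u),
                S.dist ω (φ i p) (φ i r) * S.dist ω (φ i q) (φ i u),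
                S.dist ω (φ i p) (φ i u) * S.dist ω (φ i q) (φ i r)) := by
          filter_upwards [eventually_ne' (hψ p) hωψp, eventually_ne' (hψ q) hωψq,
            eventually_ne' (hψ r) hωψr, eventually_ne' (hψ u) hωψu] with i e1 e2 e3 e4
          exact crt_of_ne _ e1 e2 e3 e4
        refine projEq_limit_aux θ _ _
          (fun i => crt (S.dist ω) ω (φ i p) (φ i q) (φ i r) (φ i u)) ?_ ?_ ?_ ?_ ?_
        · refine Filter.Eventually.of_forall fun i => ?_
          have h := (hφ i).1 ω p q r u hadm
          rwa [crt_of_ne _ hωp hωq hωr hωu] at h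
        · refine Filter.Tendsto.congr' ?_
            ((tendsto_dist' S θ hωψp hωψq (hψ p) (hψ q)).mul
              (tendsto_dist' S θ hωψr hωψu (hψ r) (hψ u)))
          filter_upwards [hev] with i h
          rw [h]
        · refine Filter.Tendsto.congr' ?_
            ((tendsto_dist' S θ hωψp hωψr (hψ p) (hψ r)).mul
              (tendsto_dist' S θ hωψq hωψu (hψ q) (hψ u)))
          filter_upwards [hev] with i h
          rw [h]
        · refine Filter.Tendsto.congr' ?_
            ((tendsto_dist' S θ hωψp hωψu (hψ p) (hψ u)).mul
              (tendsto_dist' S θ hωψq hωψr (hψ q) (hψ r)))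
          filter_upwards [hev] with i h
          rw [h]
        · by_cases hpq : p = q
          · have hpr : p ≠ r := fun h => hadm (Or.inl ⟨hpq, hpq.symm.trans h⟩)
            have hqu : q ≠ u := fun h => hadm (Or.inr (Or.inl ⟨hpq, h⟩))
            refine Or.inr ⟨mul_pos (S.dist_pos ω p r hωp hωr hpr)
                (S.dist_pos ω q u hωq hωu hqu),
              mul_pos (S.dist_pos ω _ _ hωψp hωψr fun h => hpr (hinj h))
                (S.dist_pos ω _ _ hωψq hωψu fun h => hqu (hinj h))⟩
          · by_cases hru : r = u
            · have hpr : p ≠ r := fun h => hadm (Or.inr (Or.inr (Or.inl ⟨h, hru⟩)))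
              have hqu : q ≠ u := fun h =>
                hadm (Or.inr (Or.inr (Or.inr ⟨h.trans hru.symm, hru⟩)))
              refine Or.inr ⟨mul_pos (S.dist_pos ω p r hωp hωr hpr)
                  (S.dist_pos ω q u hωq hωu hqu),
                mul_pos (S.dist_pos ω _ _ hωψp hωψr fun h => hpr (hinj h))
                  (S.dist_pos ω _ _ hωψq hωψu fun h => hqu (hinj h))⟩
            · refine Or.inl ⟨mul_pos (S.dist_pos ω p q hωp hωq hpq)
                  (S.dist_pos ω r u hωr hωu hru),
                mul_pos (S.dist_pos ω _ _ hωψp hωψq fun h => hpq (hinj h))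
                  (S.dist_pos ω _ _ hωψr hωψu fun h => hru (hinj h))⟩
      exact projEq_trans' (projEq_trans' (S.moebius_equivalent ω0 ω p q r u hadm) key)
        (S.moebius_equivalent ω ω0 (ψ p) (ψ q) (ψ r) (ψ u) (hadm' p q r u hadm))
    exact ⟨ψ, hψ, hmoeb, ⟨hinj, hsurj⟩, hψx, hψy, hψz⟩
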